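/- For every integer R ≥ 1 and all reals C ≥ 1 and d ≥ 1, lim_{r→∞} Σ_{l=⌊r/(2R)⌋}^{r} binom(r, l) · (C^l / l!) · d^r = 0, where the limit is over positive integers r and binom(r, l) is the binomial coefficient. -/

import Mathlib

open Filter

/-- For every integer `R ≥ 1` and reals `C ≥ 1`, `d ≥ 1`,
`Σ_{l=⌊r/(2R)⌋}^{r} binom(r,l) · C^l / l! · d^r → 0` as the integer `r → ∞`. -/
theorem sum_binom_factorial_tendsto_zero (R : ℕ) (hR : 1 ≤ R) (C d : ℝ)
    (hC : 1 ≤ C) (hd : 1 ≤ d) :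
    Tendsto (fun r : ℕ =>
        ∑ l ∈ Finset.Icc (r / (2 * R)) r,
          (r.choose l : ℝ) * (C ^ l / (Nat.factorial l : ℝ)) * d ^ r)
      atTop (nhds 0) := by
  set K : ℝ := 4 * C * d with hK
  have hK1 : (1 : ℝ) ≤ K := by nlinarith
  have hK0 : (0 : ℝ) ≤ K := le_trans zero_le_one hK1
  set A : ℝ := K ^ (2 * R) with hA
  have hA1 : (1 : ℝ) ≤ A := one_le_pow₀ hK1
  have h2R : 0 < 2 * R := by omega
  -- the dominating sequence
  have hg : Tendsto (fun r : ℕ => A * (A ^ (r / (2 * R)) / (Nat.factorial (r / (2 * R)) : ℝ)))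
      atTop (nhds 0) := by
    have hdiv : Tendsto (fun r : ℕ => r / (2 * R)) atTop atTop := by
      apply tendsto_atTop_atTop.2
      intro b
      exact ⟨2 * R * b, fun a ha => (Nat.le_div_iff_mul_le h2R).2 (by rw [mul_comm]; exact ha)⟩
    have hfact : Tendsto (fun m : ℕ => A ^ m / (Nat.factorial m : ℝ)) atTop (nhds 0) :=
      FloorSemiring.tendsto_pow_div_factorial_atTop A
    have := (hfact.comp hdiv).const_mul A
    simpa using this
  apply squeeze_zero _ _ hg
  · intro r
    apply Finset.sum_nonneg
    intro l _
    have h1 : (0:ℝ) ≤ (r.choose l : ℝ) := Nat.cast_nonneg _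
    have h2 : (0:ℝ) ≤ C ^ l / (Nat.factorial l : ℝ) := by positivity
    have h3 : (0:ℝ) ≤ d ^ r := by positivity
    positivity
  · intro r
    set m := r / (2 * R) with hm
    have hfm : (0 : ℝ) < (Nat.factorial m : ℝ) := by
      exact_mod_cast Nat.factorial_pos m
    -- each term bounded by 2^r * C^r * d^r / m!
    have hterm : ∀ l ∈ Finset.Icc m r,
        (r.choose l : ℝ) * (C ^ l / (Nat.factorial l : ℝ)) * d ^ r
          ≤ 2 ^ r * C ^ r * d ^ r / (Nat.factorial m : ℝ) := by
      intro l hl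
      rw [Finset.mem_Icc] at hl
      have hc : (r.choose l : ℝ) ≤ 2 ^ r := by
        have : r.choose l ≤ 2 ^ r := by
          calc r.choose l ≤ ∑ i ∈ Finset.range (r + 1), r.choose i :=
                Finset.single_le_sum (f := fun i => r.choose i) (fun i _ => Nat.zero_le _)
                  (Finset.mem_range.2 (by omega))
            _ = 2 ^ r := Nat.sum_range_choose r
        exact_mod_cast this
      have hCl : C ^ l ≤ C ^ r := pow_le_pow_right₀ hC hl.2
      have hfl : (Nat.factorial m : ℝ) ≤ (Nat.factorial l : ℝ) := by
        exact_mod_cast Nat.factorial_le hl.1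
      have hflpos : (0:ℝ) < (Nat.factorial l : ℝ) := by
        exact_mod_cast Nat.factorial_pos l
      have hd0 : (0:ℝ) ≤ d ^ r := by positivity
      have hC0 : (0:ℝ) ≤ C ^ l := by positivity
      have h1 : C ^ l / (Nat.factorial l : ℝ) ≤ C ^ r / (Nat.factorial m : ℝ) :=
        div_le_div₀ (by positivity) hCl hfm hfl
      calc (r.choose l : ℝ) * (C ^ l / (Nat.factorial l : ℝ)) * d ^ r
          ≤ 2 ^ r * (C ^ r / (Nat.factorial m : ℝ)) * d ^ r := by
            apply mul_le_mul _ le_rfl hd0 (by positivity)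
            exact mul_le_mul hc h1 (by positivity) (by positivity)
        _ = 2 ^ r * C ^ r * d ^ r / (Nat.factorial m : ℝ) := by ring
    have hcard : ((Finset.Icc m r).card : ℝ) ≤ (r + 1 : ℝ) := by
      have : (Finset.Icc m r).card ≤ r + 1 := by rw [Nat.card_Icc]; exact Nat.sub_le _ _
      exact_mod_cast this
    have hsum := Finset.sum_le_card_nsmul (Finset.Icc m r) _ _ hterm
    rw [nsmul_eq_mul] at hsum
    have hB0 : (0:ℝ) ≤ 2 ^ r * C ^ r * d ^ r / (Nat.factorial m : ℝ) := by positivity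
    have hsum2 : ∑ l ∈ Finset.Icc m r,
        (r.choose l : ℝ) * (C ^ l / (Nat.factorial l : ℝ)) * d ^ r
          ≤ (r + 1 : ℝ) * (2 ^ r * C ^ r * d ^ r / (Nat.factorial m : ℝ)) :=
      hsum.trans (mul_le_mul_of_nonneg_right hcard hB0)
    -- (r+1) * 2^r * C^r * d^r ≤ K^r ≤ A^(m+1)
    have hrK : (r + 1 : ℝ) * (2 ^ r * C ^ r * d ^ r) ≤ K ^ r := by
      have h1 : (r + 1 : ℝ) ≤ 2 ^ r := by
        exact_mod_cast Nat.succ_le_of_lt (show r < 2 ^ r from Nat.lt_two_pow_self)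
      have h2 : (r + 1 : ℝ) * (2 ^ r * C ^ r * d ^ r) ≤ 2 ^ r * (2 ^ r * C ^ r * d ^ r) := by
        apply mul_le_mul_of_nonneg_right h1 (by positivity)
      calc (r + 1 : ℝ) * (2 ^ r * C ^ r * d ^ r) ≤ 2 ^ r * (2 ^ r * C ^ r * d ^ r) := h2
        _ = (4 * C * d) ^ r := by rw [mul_pow, mul_pow]; ring_nf; rw [show (4:ℝ) = 2*2 by norm_num, mul_pow]; ring
        _ = K ^ r := by rw [hK]
    have hKA : K ^ r ≤ A * A ^ m := by
      have hr : r ≤ 2 * R * (m + 1) := by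
        have h : r < (m + 1) * (2 * R) :=
          (Nat.div_lt_iff_lt_mul h2R).1 (Nat.lt_succ_self m)
        rw [mul_comm]
        exact h.le
      calc K ^ r ≤ K ^ (2 * R * (m + 1)) := pow_le_pow_right₀ hK1 hr
        _ = (K ^ (2 * R)) ^ (m + 1) := by rw [← pow_mul]
        _ = A * A ^ m := by rw [hA, pow_succ]; ring
    calc ∑ l ∈ Finset.Icc m r,
        (r.choose l : ℝ) * (C ^ l / (Nat.factorial l : ℝ)) * d ^ r
        ≤ (r + 1 : ℝ) * (2 ^ r * C ^ r * d ^ r / (Nat.factorial m : ℝ)) := hsum2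
      _ = (r + 1 : ℝ) * (2 ^ r * C ^ r * d ^ r) / (Nat.factorial m : ℝ) := by ring
      _ ≤ K ^ r / (Nat.factorial m : ℝ) := by gcongr
      _ ≤ A * (A ^ m / (Nat.factorial m : ℝ)) := by
          rw [← mul_div_assoc]
          gcongr
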